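/- Commutator bound, H^{0,1/2} version (Lemma 5.2, bound (com3)): Let s > (d+1)/2. There is a constant C, depending on d, s and k, such that for every f ∈ H^{s,1/2}(𝕋^d) and every trigonometric polynomial u on 𝕋^d, ‖f·P[∂_α u] − P[f·∂_α u]‖_{H^{0,1/2}(𝕋^d)} ≤ C ‖f‖_{H^{s,1/2}} ‖u‖_{H^{0,1/2}}; consequently the commutator [f,P]∂_α extends to a bounded operator on H^{0,1/2}(𝕋^d) with norm at most C‖f‖_{H^{s,1/2}}. -/

import Mathlib

noncomputable section
open scoped BigOperators
open Filter

/-- The frequency lattice `ℤ^d` of the torus `𝕋^d`. -/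
abbrev Freq (d : ℕ) := Fin d → ℤ

/-- A function on `𝕋^d`, represented by its sequence of Fourier coefficients. -/
abbrev Coeffs (d : ℕ) := Freq d → ℂ

variable {d : ℕ}

/-- The pairing `⟨j, k⟩` between a lattice frequency and the frequency vector `k ∈ ℝ^d`. -/
def dotk (k : Fin d → ℝ) (j : Freq d) : ℝ := ∑ i, (j i : ℝ) * k i

/-- The Japanese bracket `⟨j⟩ = (1+|j|²)^{1/2}`. -/
def jb (j : Freq d) : ℝ := Real.sqrt (1 + ∑ i, ((j i : ℝ)) ^ 2)

/-- The entries of `k` are linearly independent over `ℚ` (equivalently, over `ℤ`). -/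
def Indep (k : Fin d → ℝ) : Prop := ∀ j : Freq d, dotk k j = 0 → j = 0

/-- The weight defining the anisotropic Sobolev norm `H^{s,θ}`. -/
def wt (k : Fin d → ℝ) (s θ : ℝ) (j : Freq d) : ℝ :=
  jb j ^ (2 * s) * (1 + (dotk k j) ^ 2) ^ θ

/-- Membership in the anisotropic Sobolev space `H^{s,θ}(𝕋^d)`. -/
def MemSob (k : Fin d → ℝ) (s θ : ℝ) (u : Coeffs d) : Prop :=
  Summable (fun j : Freq d => wt k s θ j * ‖u j‖ ^ 2)

/-- The `H^{s,θ}(𝕋^d)` norm. -/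
def sobNorm (k : Fin d → ℝ) (s θ : ℝ) (u : Coeffs d) : ℝ :=
  Real.sqrt (∑' j : Freq d, wt k s θ j * ‖u j‖ ^ 2)

/-- Membership in the Sobolev space `H^s(𝕋^d)`; `H^0 = L²`. -/
def MemHs (s : ℝ) (u : Coeffs d) : Prop :=
  Summable (fun j : Freq d => jb j ^ (2 * s) * ‖u j‖ ^ 2)

/-- The `H^s(𝕋^d)` norm; for `s = 0` this is the `L²(𝕋^d)` norm (spectrally normalized). -/
def HsNorm (s : ℝ) (u : Coeffs d) : ℝ :=
  Real.sqrt (∑' j : Freq d, jb j ^ (2 * s) * ‖u j‖ ^ 2)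

/-- The value of the function with Fourier coefficients `u` at the point `α ∈ 𝕋^d = ℝ^d/(2πℤ)^d`,
namely `Σ_j û_j e^{i⟨j,α⟩}`. -/
def value (u : Coeffs d) (α : Fin d → ℝ) : ℂ :=
  ∑' j : Freq d, u j * Complex.exp (Complex.I * ((∑ i, (j i : ℝ) * α i : ℝ) : ℂ))

/-- The squared norm of the space `ℋ^σ = H^σ × H^{σ,1/2}`. -/
def HHnormSq (k : Fin d → ℝ) (σ : ℝ) (W R : Coeffs d) : ℝ :=
  HsNorm σ W ^ 2 + sobNorm k σ (1/2) R ^ 2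

/-- The norm of the space `ℋ^σ = H^σ × H^{σ,1/2}`. -/
def HHnorm (k : Fin d → ℝ) (σ : ℝ) (W R : Coeffs d) : ℝ :=
  Real.sqrt (HHnormSq k σ W R)

/-- Membership in `ℋ^σ = H^σ × H^{σ,1/2}`. -/
def MemHH (k : Fin d → ℝ) (σ : ℝ) (W R : Coeffs d) : Prop :=
  MemHs σ W ∧ MemSob k σ (1/2) R

/-- The directional derivative `∂_α = k₁∂₁+⋯+k_d∂_d`, acting on Fourier coefficients
by multiplication by `i⟨j,k⟩`. -/
def dAl (k : Fin d → ℝ) (u : Coeffs d) : Coeffs d :=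
  fun j => Complex.I * (dotk k j : ℝ) * u j

/-- The projection `P`: the Fourier multiplier which is `1` for `⟨j,k⟩ < 0`, `1/2`
at the zero mode, `0` for `⟨j,k⟩ > 0`. -/
def Pp (k : Fin d → ℝ) (u : Coeffs d) : Coeffs d := fun j =>
  if dotk k j < 0 then u j else if dotk k j = 0 then u j / 2 else 0

/-- The complementary projection `P̄ = I - P`. -/
def Pb (k : Fin d → ℝ) (u : Coeffs d) : Coeffs d := u - Pp k u

/-- The Fourier coefficients of the complex conjugate function. -/
def conjC (u : Coeffs d) : Coeffs d := fun j => (starRingEnd ℂ) (u (-j))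

/-- The Fourier coefficients of the product of two functions (convolution). -/
def cmul (u v : Coeffs d) : Coeffs d := fun j => ∑' m : Freq d, u m * v (j - m)

/-- The Fourier coefficients of the constant function `1`. -/
def oneC : Coeffs d := fun j => if j = 0 then 1 else 0

/-- `u` is holomorphic: its Fourier coefficients vanish for `⟨j,k⟩ > 0`. -/
def Holo (k : Fin d → ℝ) (u : Coeffs d) : Prop := ∀ j : Freq d, 0 < dotk k j → u j = 0

/-- The coefficients of `2 Re u`. -/
def twoRe (u : Coeffs d) : Coeffs d := u + conjC u

/-- The coefficients of `2 Im u`. -/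
def twoIm (u : Coeffs d) : Coeffs d := fun j => (u j - conjC u j) / Complex.I

/-- The coefficients of `u²`. -/
def csq (u : Coeffs d) : Coeffs d := cmul u u

/-- The coefficients of `|u|² = u·conj(u)`. -/
def absSqC (u : Coeffs d) : Coeffs d := cmul u (conjC u)

/-- The advection velocity `b := 2 Re P[R(1-conj Y)]`. -/
def bC (k : Fin d → ℝ) (R Y : Coeffs d) : Coeffs d :=
  twoRe (Pp k (cmul R (oneC - conjC Y)))

/-- The frequency shift `a := i(P̄[conj(R)·R_α] - P[R·conj(R)_α])`. -/
def aCf (k : Fin d → ℝ) (R : Coeffs d) : Coeffs d := fun j =>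
  Complex.I * ((Pb k (cmul (conjC R) (dAl k R)) - Pp k (cmul R (dAl k (conjC R)))) j)

/-- The auxiliary function
`M := P̄[conj(R)·Y_α − R_α·conj(Y)] + P[R·conj(Y)_α − conj(R)_α·Y]`. -/
def MCf (k : Fin d → ℝ) (R Y : Coeffs d) : Coeffs d :=
  Pb k (cmul (conjC R) (dAl k Y) - cmul (dAl k R) (conjC Y))
    + Pp k (cmul R (dAl k (conjC Y)) - cmul (dAl k (conjC R)) Y)

/-- `(W,R,Y)` solves the differentiated gravity water wave system on the time interval `I`:
`𝐖_t + b·𝐖_α + (1+𝐖)(1−conj Y)·R_α = (1+𝐖)M` and `R_t + b·R_α = i(Y − a(1−Y))`,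
where `Y = 𝐖/(1+𝐖)` (equivalently `(1+𝐖)·Y = 𝐖`), so that
`(1+𝐖)/(1+conj 𝐖) = (1+𝐖)(1−conj Y)` and `i(𝐖−a)/(1+𝐖) = i(Y − a(1−Y))`. -/
structure IsWWSol (k : Fin d → ℝ) (I : Set ℝ) (W R Y : ℝ → Coeffs d) : Prop where
  holoW : ∀ t ∈ I, Holo k (W t)
  holoR : ∀ t ∈ I, Holo k (R t)
  Ymem : ∀ t ∈ I, MemHs 0 (Y t)
  Ydef : ∀ t ∈ I, cmul (oneC + W t) (Y t) = W t
  eqW : ∀ t ∈ I, ∀ j : Freq d,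
    HasDerivWithinAt (fun τ => W τ j)
      ((cmul (oneC + W t) (MCf k (R t) (Y t))
        - cmul (bC k (R t) (Y t)) (dAl k (W t))
        - cmul (cmul (oneC + W t) (oneC - conjC (Y t))) (dAl k (R t))) j) I t
  eqR : ∀ t ∈ I, ∀ j : Freq d,
    HasDerivWithinAt (fun τ => R τ j)
      ((Complex.I • (Y t - cmul (aCf k (R t)) (oneC - Y t))
        - cmul (bC k (R t) (Y t)) (dAl k (R t))) j) I t


/-! ### Auxiliary lemmas -/

section Aux

/-- Cauchy–Schwarz for infinite sums of nonnegative reals. -/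
lemma tsum_mul_le_sqrt_sqrt {ι : Type*} {p q : ι → ℝ} (hp : ∀ i, 0 ≤ p i) (hq : ∀ i, 0 ≤ q i)
    (hp2 : Summable (fun i => p i ^ 2)) (hq2 : Summable (fun i => q i ^ 2)) :
    Summable (fun i => p i * q i) ∧
      ∑' i, p i * q i ≤ Real.sqrt (∑' i, p i ^ 2) * Real.sqrt (∑' i, q i ^ 2) := by
  have hsum : Summable (fun i => p i * q i) := by
    refine Summable.of_nonneg_of_le (fun i => mul_nonneg (hp i) (hq i)) (fun i => ?_)
      ((hp2.add hq2).div_const 2)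
    nlinarith [sq_nonneg (p i - q i)]
  refine ⟨hsum, Summable.tsum_le_of_sum_le hsum fun t => ?_⟩
  have h1 : (∑ i ∈ t, p i * q i) ^ 2 ≤ (∑ i ∈ t, p i ^ 2) * (∑ i ∈ t, q i ^ 2) :=
    Finset.sum_mul_sq_le_sq_mul_sq t p q
  have h2 : (∑ i ∈ t, p i ^ 2) ≤ ∑' i, p i ^ 2 := Summable.sum_le_tsum t (fun i _ => sq_nonneg _) hp2
  have h3 : (∑ i ∈ t, q i ^ 2) ≤ ∑' i, q i ^ 2 := Summable.sum_le_tsum t (fun i _ => sq_nonneg _) hq2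
  have hnn : 0 ≤ ∑ i ∈ t, p i * q i :=
    Finset.sum_nonneg fun i _ => mul_nonneg (hp i) (hq i)
  calc ∑ i ∈ t, p i * q i = Real.sqrt ((∑ i ∈ t, p i * q i) ^ 2) := (Real.sqrt_sq hnn).symm
    _ ≤ Real.sqrt ((∑' i, p i ^ 2) * (∑' i, q i ^ 2)) := by
        apply Real.sqrt_le_sqrt
        calc (∑ i ∈ t, p i * q i) ^ 2 ≤ (∑ i ∈ t, p i ^ 2) * (∑ i ∈ t, q i ^ 2) := h1
          _ ≤ (∑' i, p i ^ 2) * (∑' i, q i ^ 2) := by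
            apply mul_le_mul h2 h3 (Finset.sum_nonneg fun i _ => sq_nonneg _)
            exact tsum_nonneg fun i => sq_nonneg _
    _ = _ := Real.sqrt_mul (tsum_nonneg fun i => sq_nonneg _) _

lemma summable_int_pow_aux {q : ℝ} (hq : 1/2 < q) :
    Summable (fun n : ℤ => (1 + (n : ℝ) ^ 2) ^ (-q)) := by
  have h2q : 1 < 2 * q := by linarith
  have hg : Summable (fun n : ℤ => |(n : ℝ)| ^ (-(2*q)) + if n = 0 then (1:ℝ) else 0) := by
    refine (Real.summable_abs_int_rpow h2q).add ?_
    exact summable_of_ne_finset_zero (s := {0}) (by intro n hn; simp at hn ⊢; exact hn)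
  refine Summable.of_nonneg_of_le (fun n => Real.rpow_nonneg (by positivity) _) (fun n => ?_) hg
  rcases eq_or_ne n 0 with rfl | hn
  · norm_num
    positivity
  · simp only [hn, if_false, add_zero]
    have h1 : (0:ℝ) < (n:ℝ)^2 := by
      have : (n:ℝ) ≠ 0 := Int.cast_ne_zero.mpr hn
      positivity
    have : (1 + (n : ℝ) ^ 2) ^ (-q) ≤ ((n:ℝ)^2) ^ (-q) := by
      apply Real.rpow_le_rpow_of_nonpos h1 (by linarith) (by linarith)
    refine this.trans (le_of_eq ?_)
    rw [← sq_abs, ← Real.rpow_natCast |(n:ℝ)| 2, ← Real.rpow_mul (abs_nonneg _)]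
    norm_num

lemma summable_pi_prod {h : ℤ → ℝ} (h0 : ∀ n, 0 ≤ h n) (hs : Summable h) :
    ∀ d : ℕ, Summable (fun m : Fin d → ℤ => ∏ i, h (m i)) := by
  intro d
  induction d with
  | zero =>
    simp only [Finset.univ_eq_empty, Finset.prod_empty]
    exact summable_of_finite_support (Set.toFinite _)
  | succ n ih =>
    have hp0 : (0 : (Fin n → ℤ) → ℝ) ≤ fun m => ∏ i, h (m i) := by
      intro m; exact Finset.prod_nonneg fun i _ => h0 _
    have hh0 : (0 : ℤ → ℝ) ≤ h := fun n => h0 n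
    have hmul : Summable (fun x : ℤ × (Fin n → ℤ) => h x.1 * ∏ i, h (x.2 i)) :=
      Summable.mul_of_nonneg (ι := ℤ) (ι' := Fin n → ℤ) (f := h)
        (g := fun m : Fin n → ℤ => ∏ i, h (m i)) hs ih hh0 hp0
    rw [← (Fin.consEquiv (fun _ : Fin (n+1) => ℤ)).summable_iff]
    refine hmul.congr fun x => ?_
    show h x.1 * ∏ i, h (x.2 i)
        = ∏ i, h ((Fin.consEquiv (fun _ : Fin (n+1) => ℤ)) x i)
    simp only [Fin.consEquiv_apply]
    rw [Fin.prod_univ_succ]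
    simp

lemma summable_lattice {d : ℕ} (hd : 1 ≤ d) {r : ℝ} (hr : (d : ℝ) < r) :
    Summable (fun m : Fin d → ℤ => (1 + ∑ i, ((m i : ℝ)) ^ 2) ^ (-(r/2))) := by
  set q : ℝ := r / (2 * d) with hqdef
  have hd0 : (0:ℝ) < d := by exact_mod_cast hd
  have hq : 1/2 < q := by
    rw [hqdef, lt_div_iff₀ (by positivity)]
    nlinarith
  have hq0 : 0 < q := lt_trans (by norm_num) hq
  have hh0 : ∀ n : ℤ, 0 ≤ (1 + (n : ℝ) ^ 2) ^ (-q) := fun n => Real.rpow_nonneg (by positivity) _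
  refine Summable.of_nonneg_of_le (fun m => Real.rpow_nonneg (by positivity) _)
    (fun m => ?_) (summable_pi_prod hh0 (summable_int_pow_aux hq) d)
  have hS : (0:ℝ) < 1 + ∑ i, ((m i : ℝ)) ^ 2 := by positivity
  have hprodpos : (0:ℝ) < ∏ i, (1 + ((m i : ℝ)) ^ 2) := Finset.prod_pos fun i _ => by positivity
  have key : ∏ i, (1 + ((m i : ℝ)) ^ 2) ≤ (1 + ∑ i, ((m i : ℝ)) ^ 2) ^ (d : ℕ) := by
    calc ∏ i, (1 + ((m i : ℝ)) ^ 2)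
        ≤ (1 + ∑ i, ((m i : ℝ)) ^ 2) ^ (Finset.univ : Finset (Fin d)).card := by
          rw [← Finset.prod_const]
          apply Finset.prod_le_prod (fun i _ => by positivity)
          intro i _
          have : ((m i : ℝ)) ^ 2 ≤ ∑ j, ((m j : ℝ)) ^ 2 :=
            Finset.single_le_sum (f := fun j => ((m j:ℝ))^2) (fun j _ => sq_nonneg _)
              (Finset.mem_univ i)
          linarith
      _ = _ := by rw [Finset.card_univ, Fintype.card_fin]
  calc (1 + ∑ i, ((m i : ℝ)) ^ 2) ^ (-(r/2))
      = ((1 + ∑ i, ((m i : ℝ)) ^ 2) ^ (d : ℕ)) ^ (-q) := by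
        rw [← Real.rpow_natCast (1 + ∑ i, ((m i : ℝ)) ^ 2) d, ← Real.rpow_mul hS.le]
        congr 1
        field_simp [hqdef]
        rw [hqdef]; field_simp [hd0.ne']
    _ ≤ (∏ i, (1 + ((m i : ℝ)) ^ 2)) ^ (-q) :=
        Real.rpow_le_rpow_of_nonpos hprodpos key (by linarith)
    _ = ∏ i, (1 + ((m i : ℝ)) ^ 2) ^ (-q) :=
        (Real.finset_prod_rpow _ _ (fun i _ => by positivity) _).symm

/-- The scalar symbol of the projection `P`. -/
def chi (x : ℝ) : ℝ := if x < 0 then 1 else if x = 0 then 1/2 else 0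

lemma chi_eq_of_mul_pos {a b : ℝ} (h : 0 < a * b) : chi a = chi b := by
  rcases mul_pos_iff.mp h with ⟨ha, hb⟩ | ⟨ha, hb⟩ <;>
    simp [chi, ha, hb, not_lt.mpr ha.le, not_lt.mpr hb.le, ha.ne', hb.ne', ha.ne, hb.ne]

lemma abs_chi_sub_chi_le (a b : ℝ) : |chi a - chi b| ≤ 1 := by
  unfold chi
  split_ifs <;> (rw [abs_le]; constructor <;> norm_num)

lemma rpow_fourth_pow (x : ℝ) (hx : 0 ≤ x) : (x ^ ((1:ℝ)/4)) ^ (4:ℕ) = x := by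
  rw [← Real.rpow_natCast (x ^ ((1:ℝ)/4)) 4, ← Real.rpow_mul hx]
  norm_num

lemma rpow_half_pow4 (x : ℝ) (hx : 0 ≤ x) : (x ^ ((1:ℝ)/2)) ^ (4:ℕ) = x ^ 2 := by
  rw [← Real.rpow_natCast (x ^ ((1:ℝ)/2)) 4, ← Real.rpow_mul hx]
  norm_num

lemma key_ineq (a b : ℝ) :
    (1 + a^2) ^ ((1:ℝ)/4) * (|chi b - chi a| * |b|)
      ≤ (1 + (a - b)^2) ^ ((1:ℝ)/2) * (1 + b^2) ^ ((1:ℝ)/4) := by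
  rcases eq_or_ne (chi b) (chi a) with h | h
  · rw [h, sub_self, abs_zero, zero_mul, mul_zero]
    positivity
  · have hab : a * b ≤ 0 := by
      by_contra hc
      exact h (chi_eq_of_mul_pos (show (0:ℝ) < b * a by nlinarith [lt_of_not_ge hc]))
    have ha2 : a ^ 2 ≤ (a - b) ^ 2 := by nlinarith
    have hb2 : b ^ 2 ≤ (a - b) ^ 2 := by nlinarith
    have hchi : |chi b - chi a| ≤ 1 := abs_chi_sub_chi_le b a
    have hL : 0 ≤ (1 + a^2) ^ ((1:ℝ)/4) * (|chi b - chi a| * |b|) := by positivity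
    have hR : 0 ≤ (1 + (a - b)^2) ^ ((1:ℝ)/2) * (1 + b^2) ^ ((1:ℝ)/4) := by positivity
    rw [← pow_le_pow_iff_left₀ hL hR (n := 4) (by norm_num)]
    have e1 : ((1 + a^2) ^ ((1:ℝ)/4) * (|chi b - chi a| * |b|)) ^ (4:ℕ)
        = (1 + a^2) * (|chi b - chi a| ^ (4:ℕ) * |b| ^ (4:ℕ)) := by
      rw [mul_pow, mul_pow, rpow_fourth_pow _ (by positivity)]
    have e2 : ((1 + (a - b)^2) ^ ((1:ℝ)/2) * (1 + b^2) ^ ((1:ℝ)/4)) ^ (4:ℕ)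
        = (1 + (a - b)^2) ^ 2 * (1 + b^2) := by
      rw [mul_pow, rpow_half_pow4 _ (by positivity), rpow_fourth_pow _ (by positivity)]
    rw [e1, e2]
    have h4 : |chi b - chi a| ^ (4:ℕ) ≤ 1 := by
      calc |chi b - chi a| ^ (4:ℕ) ≤ 1 ^ (4:ℕ) := pow_le_pow_left₀ (abs_nonneg _) hchi 4
        _ = 1 := one_pow 4
    have hb4 : |b| ^ (4:ℕ) = (b ^ 2) ^ 2 := by
      calc |b| ^ (4:ℕ) = (|b| ^ 2) ^ 2 := by ring
        _ = (b ^ 2) ^ 2 := by rw [sq_abs]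
    calc (1 + a^2) * (|chi b - chi a| ^ (4:ℕ) * |b| ^ (4:ℕ))
        ≤ (1 + a^2) * (1 * |b| ^ (4:ℕ)) := by
          apply mul_le_mul_of_nonneg_left _ (by positivity)
          exact mul_le_mul_of_nonneg_right h4 (by positivity)
      _ = (1 + a^2) * (b^2)^2 := by rw [one_mul, hb4]
      _ ≤ (1 + (a - b)^2) ^ 2 * (1 + b^2) := by
          nlinarith [mul_le_mul_of_nonneg_right hb2 (sq_nonneg b),
            mul_le_mul_of_nonneg_right ha2 (sq_nonneg b), sq_nonneg b, sq_nonneg (a-b),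
            sq_nonneg a, mul_nonneg (sq_nonneg (a-b)) (sq_nonneg b)]

lemma rpow_sq_eq {x : ℝ} (hx : 0 < x) (t : ℝ) : (x ^ t) ^ (2:ℕ) = x ^ (2 * t) := by
  rw [pow_two, ← Real.rpow_add hx]
  congr 1
  ring

variable {d : ℕ}

lemma jb_pos (j : Freq d) : 0 < jb j := by
  unfold jb
  have : (0:ℝ) < 1 + ∑ i, ((j i : ℝ)) ^ 2 := by positivity
  exact Real.sqrt_pos.mpr this

lemma one_le_jb (j : Freq d) : 1 ≤ jb j := by
  unfold jb
  have h0 : (0:ℝ) ≤ ∑ i, ((j i : ℝ)) ^ 2 := by positivity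
  have := Real.sqrt_le_sqrt (show (1:ℝ) ≤ 1 + ∑ i, ((j i : ℝ)) ^ 2 by linarith)
  simpa using this

lemma dotk_sub (k : Fin d → ℝ) (j n : Freq d) : dotk k (j - n) = dotk k j - dotk k n := by
  unfold dotk
  rw [← Finset.sum_sub_distrib]
  apply Finset.sum_congr rfl
  intro i _
  have : ((j - n) i : ℝ) = (j i : ℝ) - (n i : ℝ) := by
    simp [Pi.sub_apply]
  rw [this]
  ring

lemma Pp_apply (k : Fin d → ℝ) (v : Coeffs d) (j : Freq d) :
    Pp k v j = ((chi (dotk k j) : ℝ) : ℂ) * v j := by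
  unfold Pp chi
  split_ifs <;> push_cast <;> ring

lemma comm_rep (k : Fin d → ℝ) (f u : Coeffs d) (F : Finset (Freq d))
    (hF : ∀ n, n ∉ F → u n = 0) (j : Freq d) :
    (cmul f (Pp k (dAl k u)) - Pp k (cmul f (dAl k u))) j
      = ∑ n ∈ F, f (j - n) * (((chi (dotk k n) - chi (dotk k j) : ℝ)) : ℂ)
          * (Complex.I * ((dotk k n : ℝ) : ℂ) * u n) := by
  have hdAl : ∀ n, n ∉ F → dAl k u n = 0 := by
    intro n hn
    unfold dAl
    rw [hF n hn, mul_zero]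
  have h1 : cmul f (Pp k (dAl k u)) j
      = ∑ n ∈ F, f (j - n) * (((chi (dotk k n) : ℝ)) : ℂ)
          * (Complex.I * ((dotk k n : ℝ) : ℂ) * u n) := by
    unfold cmul
    rw [← Equiv.tsum_eq (Equiv.subLeft j) (fun m => f m * (Pp k (dAl k u)) (j - m))]
    simp only [Equiv.subLeft_apply, sub_sub_cancel]
    rw [tsum_eq_sum (s := F) (by
      intro n hn
      rw [Pp_apply, hdAl n hn, mul_zero, mul_zero])]
    apply Finset.sum_congr rfl
    intro n _
    rw [Pp_apply]
    unfold dAl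
    ring
  have h2 : Pp k (cmul f (dAl k u)) j
      = ∑ n ∈ F, f (j - n) * (((chi (dotk k j) : ℝ)) : ℂ)
          * (Complex.I * ((dotk k n : ℝ) : ℂ) * u n) := by
    rw [Pp_apply]
    unfold cmul
    rw [← Equiv.tsum_eq (Equiv.subLeft j) (fun m => f m * (dAl k u) (j - m))]
    simp only [Equiv.subLeft_apply, sub_sub_cancel]
    rw [tsum_eq_sum (s := F) (by
      intro n hn
      rw [hdAl n hn, mul_zero])]
    rw [Finset.mul_sum]
    apply Finset.sum_congr rfl
    intro n _
    unfold dAl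
    ring
  rw [Pi.sub_apply, h1, h2, ← Finset.sum_sub_distrib]
  apply Finset.sum_congr rfl
  intro n _
  push_cast
  ring


/-- The `H^{0,1/2}` weight. -/
def wgt (k : Fin d → ℝ) (j : Freq d) : ℝ := (1 + (dotk k j) ^ 2) ^ ((1:ℝ)/2)

/-- Its square root. -/
def wgt4 (k : Fin d → ℝ) (j : Freq d) : ℝ := (1 + (dotk k j) ^ 2) ^ ((1:ℝ)/4)

lemma wgt_pos (k : Fin d → ℝ) (j : Freq d) : 0 < wgt k j :=
  Real.rpow_pos_of_pos (by positivity) _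

lemma wgt4_pos (k : Fin d → ℝ) (j : Freq d) : 0 < wgt4 k j :=
  Real.rpow_pos_of_pos (by positivity) _

lemma wgt4_sq (k : Fin d → ℝ) (j : Freq d) : wgt4 k j ^ 2 = wgt k j := by
  unfold wgt4 wgt
  rw [rpow_sq_eq (by positivity)]
  norm_num

lemma wt0_eq (k : Fin d → ℝ) (j : Freq d) : wt k 0 (1/2) j = wgt k j := by
  unfold wt wgt
  norm_num

lemma key_ineq' (k : Fin d → ℝ) (j n : Freq d) :
    wgt4 k j * (|chi (dotk k n) - chi (dotk k j)| * |dotk k n|)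
      ≤ wgt k (j - n) * wgt4 k n := by
  have h := key_ineq (dotk k j) (dotk k n)
  unfold wgt4 wgt
  rw [dotk_sub]
  exact h

end Aux

set_option maxHeartbeats 2000000 in
/-- **Lemma 5.2, bound (com3) (Commutator bound, `H^{0,1/2}` version).** Let
`s > (d+1)/2`. There is a constant `C = C(d,s,k)` such that for every
`f ∈ H^{s,1/2}(𝕋^d)` and every trigonometric polynomial `u` on `𝕋^d`,
`‖f·P[∂_α u] − P[f·∂_α u]‖_{H^{0,1/2}} ≤ C ‖f‖_{H^{s,1/2}} ‖u‖_{H^{0,1/2}}`;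
consequently `[f,P]∂_α` extends to a bounded operator on `H^{0,1/2}(𝕋^d)`. -/
theorem commutator_H012
    (d : ℕ) (hd : 1 ≤ d) (k : Fin d → ℝ) (hk : Indep k)
    (s : ℝ) (hs : ((d : ℝ) + 1) / 2 < s) :
    ∃ C : ℝ, 0 < C ∧
      ∀ f u : Coeffs d, MemSob k s (1/2) f → (Function.support u).Finite →
        sobNorm k 0 (1/2) (cmul f (Pp k (dAl k u)) - Pp k (cmul f (dAl k u)))
          ≤ C * sobNorm k s (1/2) f * sobNorm k 0 (1/2) u := by
  classical
  have hrd : (d : ℝ) < 2 * s - 1 := by linarith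
  -- Summability of the comparison weight
  have hPsum : Summable (fun m : Freq d => jb m ^ (-(2*s)) * wgt k m) := by
    set K : ℝ := ∑ i, |k i| with hK
    have hK0 : 0 ≤ K := Finset.sum_nonneg fun i _ => abs_nonneg _
    have hwle : ∀ m : Freq d, wgt k m ≤ Real.sqrt (1 + K^2) * jb m := by
      intro m
      have habs : |dotk k m| ≤ jb m * K := by
        unfold dotk
        calc |∑ i, (m i : ℝ) * k i| ≤ ∑ i, |(m i : ℝ) * k i| := Finset.abs_sum_le_sum_abs _ _
          _ ≤ ∑ i, jb m * |k i| := by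
              apply Finset.sum_le_sum
              intro i _
              rw [abs_mul]
              apply mul_le_mul_of_nonneg_right _ (abs_nonneg _)
              have h1 : ((m i:ℝ))^2 ≤ 1 + ∑ l, ((m l : ℝ))^2 := by
                have h0 : ((m i:ℝ))^2 ≤ ∑ l, ((m l : ℝ))^2 :=
                  Finset.single_le_sum (f := fun l => ((m l:ℝ))^2)
                    (fun l _ => sq_nonneg _) (Finset.mem_univ i)
                linarith
              have h2 := Real.sqrt_le_sqrt h1
              rwa [Real.sqrt_sq_eq_abs] at h2
          _ = jb m * K := by rw [← Finset.mul_sum]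
      have h3 : (dotk k m)^2 ≤ (jb m * K)^2 := by
        rw [← sq_abs (dotk k m)]
        exact pow_le_pow_left₀ (abs_nonneg _) habs 2
      have h2 : 1 + (dotk k m)^2 ≤ (1 + K^2) * (jb m)^2 := by
        nlinarith [one_le_jb m, jb_pos m]
      calc wgt k m = (1 + (dotk k m)^2) ^ ((1:ℝ)/2) := rfl
        _ ≤ ((1 + K^2) * (jb m)^2) ^ ((1:ℝ)/2) :=
            Real.rpow_le_rpow (by positivity) h2 (by norm_num)
        _ = Real.sqrt (1 + K^2) * jb m := by
            rw [Real.mul_rpow (by positivity) (by positivity), Real.sqrt_eq_rpow]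
            congr 1
            rw [← Real.rpow_natCast (jb m) 2, ← Real.rpow_mul (jb_pos m).le]
            norm_num
    have hmaj : Summable (fun m : Freq d => Real.sqrt (1 + K^2) * jb m ^ (1 - 2*s)) := by
      apply Summable.mul_left
      refine (summable_lattice hd (show (d:ℝ) < 2*s - 1 from hrd)).congr fun m => ?_
      unfold jb
      rw [Real.sqrt_eq_rpow, ← Real.rpow_mul (by positivity)]
      congr 1
      ring
    refine Summable.of_nonneg_of_le
      (fun m => mul_nonneg (Real.rpow_nonneg (jb_pos m).le _) (wgt_pos k m).le)
      (fun m => ?_) hmaj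
    calc jb m ^ (-(2*s)) * wgt k m
        ≤ jb m ^ (-(2*s)) * (Real.sqrt (1 + K^2) * jb m) :=
          mul_le_mul_of_nonneg_left (hwle m) (Real.rpow_nonneg (jb_pos m).le _)
      _ = Real.sqrt (1 + K^2) * jb m ^ (1 - 2*s) := by
          rw [show jb m ^ (1 - 2*s) = jb m ^ (-(2*s)) * jb m ^ (1:ℝ) by
            rw [← Real.rpow_add (jb_pos m)]; congr 1; ring]
          rw [Real.rpow_one]
          ring
  set B : ℝ := Real.sqrt (∑' m : Freq d, jb m ^ (-(2*s)) * wgt k m) with hBdef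
  have hB0 : 0 ≤ B := Real.sqrt_nonneg _
  refine ⟨B + 1, by positivity, ?_⟩
  intro f u hf hu
  -- ℓ¹ bound on the weighted coefficients of f, by Cauchy-Schwarz
  have hp2 : Summable (fun m : Freq d => (jb m ^ (-s) * wgt4 k m) ^ 2) := by
    refine hPsum.congr fun m => ?_
    rw [mul_pow, rpow_sq_eq (jb_pos m) (-s), wgt4_sq, show (2:ℝ) * -s = -(2*s) by ring]
  have hq2 : Summable (fun m : Freq d => (jb m ^ s * (wgt4 k m * ‖f m‖)) ^ 2) := by
    refine hf.congr fun m => ?_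
    rw [mul_pow, mul_pow, rpow_sq_eq (jb_pos m) s, wgt4_sq]
    unfold wt wgt
    ring
  obtain ⟨hGsum', hGle⟩ := tsum_mul_le_sqrt_sqrt
    (p := fun m => jb m ^ (-s) * wgt4 k m)
    (q := fun m => jb m ^ s * (wgt4 k m * ‖f m‖))
    (fun m => mul_nonneg (Real.rpow_nonneg (jb_pos m).le _) (wgt4_pos k m).le)
    (fun m => mul_nonneg (Real.rpow_nonneg (jb_pos m).le _)
      (mul_nonneg (wgt4_pos k m).le (norm_nonneg _)))
    hp2 hq2
  have hpq : ∀ m : Freq d,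
      (jb m ^ (-s) * wgt4 k m) * (jb m ^ s * (wgt4 k m * ‖f m‖)) = ‖f m‖ * wgt k m := by
    intro m
    have h1 : jb m ^ (-s) * jb m ^ s = 1 := by
      rw [← Real.rpow_add (jb_pos m)]
      simp
    have h2 : wgt4 k m * wgt4 k m = wgt k m := by rw [← pow_two, wgt4_sq]
    calc (jb m ^ (-s) * wgt4 k m) * (jb m ^ s * (wgt4 k m * ‖f m‖))
        = (jb m ^ (-s) * jb m ^ s) * ((wgt4 k m * wgt4 k m) * ‖f m‖) := by ring
      _ = ‖f m‖ * wgt k m := by rw [h1, h2]; ring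
  have hGsum : Summable (fun m : Freq d => ‖f m‖ * wgt k m) := hGsum'.congr hpq
  have hG0 : ∀ m : Freq d, 0 ≤ ‖f m‖ * wgt k m :=
    fun m => mul_nonneg (norm_nonneg _) (wgt_pos k m).le
  have hA0 : 0 ≤ ∑' m : Freq d, ‖f m‖ * wgt k m := tsum_nonneg hG0
  have hAle : (∑' m : Freq d, ‖f m‖ * wgt k m) ≤ B * sobNorm k s (1/2) f := by
    rw [← tsum_congr hpq]
    refine hGle.trans (le_of_eq ?_)
    congr 1
    · rw [hBdef]
      congr 1
      refine tsum_congr fun m => ?_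
      rw [mul_pow, rpow_sq_eq (jb_pos m) (-s), wgt4_sq, show (2:ℝ) * -s = -(2*s) by ring]
    · unfold sobNorm
      congr 1
      refine tsum_congr fun m => ?_
      rw [mul_pow, mul_pow, rpow_sq_eq (jb_pos m) s, wgt4_sq]
      unfold wt wgt
      ring
  -- setup for u
  set F : Finset (Freq d) := hu.toFinset with hFdef
  have hF : ∀ n : Freq d, n ∉ F → u n = 0 := by
    intro n hn
    by_contra h
    exact hn (by simpa [hFdef, Set.Finite.mem_toFinset, Function.mem_support] using h)
  have hU0 : 0 ≤ ∑ n ∈ F, wgt k n * ‖u n‖ ^ 2 :=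
    Finset.sum_nonneg fun n _ => mul_nonneg (wgt_pos k n).le (sq_nonneg _)
  have hUnorm : sobNorm k 0 (1/2) u = Real.sqrt (∑ n ∈ F, wgt k n * ‖u n‖ ^ 2) := by
    unfold sobNorm
    congr 1
    rw [tsum_eq_sum (s := F) (by intro n hn; rw [hF n hn]; simp)]
    exact Finset.sum_congr rfl fun n _ => by rw [wt0_eq]
  -- translates of G
  have hGtrans : ∀ n : Freq d, Summable (fun j : Freq d => ‖f (j - n)‖ * wgt k (j - n)) :=
    fun n => (Equiv.subRight n).summable_iff.mpr hGsum
  have hGtsum : ∀ n : Freq d,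
      (∑' j : Freq d, ‖f (j - n)‖ * wgt k (j - n)) = ∑' m : Freq d, ‖f m‖ * wgt k m :=
    fun n => (Equiv.subRight n).tsum_eq (fun m => ‖f m‖ * wgt k m)
  have hsumG_le : ∀ j : Freq d,
      (∑ n ∈ F, ‖f (j - n)‖ * wgt k (j - n)) ≤ ∑' m : Freq d, ‖f m‖ * wgt k m := by
    intro j
    have hinj : ∀ x ∈ F, ∀ y ∈ F, j - x = j - y → x = y := fun x _ y _ h =>
      sub_right_injective h
    rw [← Finset.sum_image (f := fun m => ‖f m‖ * wgt k m) (g := fun n => j - n) hinj]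
    exact Summable.sum_le_tsum _ (fun m _ => hG0 m) hGsum
  -- pointwise bound
  have hrep := comm_rep k f u F hF
  have hbound : ∀ j : Freq d,
      wgt4 k j * ‖(cmul f (Pp k (dAl k u)) - Pp k (cmul f (dAl k u))) j‖
        ≤ ∑ n ∈ F, (‖f (j - n)‖ * wgt k (j - n)) * (wgt4 k n * ‖u n‖) := by
    intro j
    rw [hrep j]
    have hn1 : ‖(∑ n ∈ F, f (j - n) * (((chi (dotk k n) - chi (dotk k j) : ℝ)) : ℂ)
        * (Complex.I * ((dotk k n : ℝ) : ℂ) * u n))‖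
        ≤ ∑ n ∈ F, ‖f (j - n)‖ * (|chi (dotk k n) - chi (dotk k j)| * |dotk k n|) * ‖u n‖ := by
      refine (norm_sum_le _ _).trans (le_of_eq (Finset.sum_congr rfl fun n _ => ?_))
      simp only [norm_mul, Complex.norm_real, Complex.norm_I, Real.norm_eq_abs, one_mul]
      ring
    calc wgt4 k j * ‖(∑ n ∈ F, f (j - n) * (((chi (dotk k n) - chi (dotk k j) : ℝ)) : ℂ)
          * (Complex.I * ((dotk k n : ℝ) : ℂ) * u n))‖
        ≤ wgt4 k j * ∑ n ∈ F,
            ‖f (j - n)‖ * (|chi (dotk k n) - chi (dotk k j)| * |dotk k n|) * ‖u n‖ :=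
          mul_le_mul_of_nonneg_left hn1 (wgt4_pos k j).le
      _ = ∑ n ∈ F, wgt4 k j *
            (‖f (j - n)‖ * (|chi (dotk k n) - chi (dotk k j)| * |dotk k n|) * ‖u n‖) :=
          Finset.mul_sum _ _ _
      _ ≤ ∑ n ∈ F, (‖f (j - n)‖ * wgt k (j - n)) * (wgt4 k n * ‖u n‖) := by
          refine Finset.sum_le_sum fun n _ => ?_
          calc wgt4 k j *
              (‖f (j - n)‖ * (|chi (dotk k n) - chi (dotk k j)| * |dotk k n|) * ‖u n‖)
              = (‖f (j - n)‖ * ‖u n‖) *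
                  (wgt4 k j * (|chi (dotk k n) - chi (dotk k j)| * |dotk k n|)) := by ring
            _ ≤ (‖f (j - n)‖ * ‖u n‖) * (wgt k (j - n) * wgt4 k n) :=
                mul_le_mul_of_nonneg_left (key_ineq' k j n)
                  (mul_nonneg (norm_nonneg _) (norm_nonneg _))
            _ = (‖f (j - n)‖ * wgt k (j - n)) * (wgt4 k n * ‖u n‖) := by ring
  -- pointwise squared bound
  have hptwise : ∀ j : Freq d,
      wt k 0 (1/2) j * ‖(cmul f (Pp k (dAl k u)) - Pp k (cmul f (dAl k u))) j‖ ^ 2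
        ≤ (∑' m : Freq d, ‖f m‖ * wgt k m) *
            ∑ n ∈ F, (‖f (j - n)‖ * wgt k (j - n)) * (wgt k n * ‖u n‖ ^ 2) := by
    intro j
    rw [wt0_eq, ← wgt4_sq, ← mul_pow]
    have h1 : (wgt4 k j * ‖(cmul f (Pp k (dAl k u)) - Pp k (cmul f (dAl k u))) j‖) ^ 2
        ≤ (∑ n ∈ F, (‖f (j - n)‖ * wgt k (j - n)) * (wgt4 k n * ‖u n‖)) ^ 2 :=
      pow_le_pow_left₀ (mul_nonneg (wgt4_pos k j).le (norm_nonneg _)) (hbound j) 2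
    refine h1.trans ?_
    -- Cauchy-Schwarz on the finite sum
    have hCS : (∑ n ∈ F, (‖f (j - n)‖ * wgt k (j - n)) * (wgt4 k n * ‖u n‖)) ^ 2
        ≤ (∑ n ∈ F, ‖f (j - n)‖ * wgt k (j - n)) *
            ∑ n ∈ F, (‖f (j - n)‖ * wgt k (j - n)) * (wgt k n * ‖u n‖ ^ 2) := by
      have := Finset.sum_mul_sq_le_sq_mul_sq F
        (fun n => Real.sqrt (‖f (j - n)‖ * wgt k (j - n)))
        (fun n => Real.sqrt (‖f (j - n)‖ * wgt k (j - n)) * (wgt4 k n * ‖u n‖))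
      have e1 : ∀ n ∈ F, Real.sqrt (‖f (j - n)‖ * wgt k (j - n)) *
          (Real.sqrt (‖f (j - n)‖ * wgt k (j - n)) * (wgt4 k n * ‖u n‖))
          = (‖f (j - n)‖ * wgt k (j - n)) * (wgt4 k n * ‖u n‖) := by
        intro n _
        rw [← mul_assoc, Real.mul_self_sqrt (hG0 _)]
      have e2 : ∀ n ∈ F, Real.sqrt (‖f (j - n)‖ * wgt k (j - n)) ^ 2
          = ‖f (j - n)‖ * wgt k (j - n) := fun n _ => Real.sq_sqrt (hG0 _)
      have e3 : ∀ n ∈ F, (Real.sqrt (‖f (j - n)‖ * wgt k (j - n)) * (wgt4 k n * ‖u n‖)) ^ 2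
          = (‖f (j - n)‖ * wgt k (j - n)) * (wgt k n * ‖u n‖ ^ 2) := by
        intro n _
        rw [mul_pow, Real.sq_sqrt (hG0 _), mul_pow, wgt4_sq]
      rw [Finset.sum_congr rfl e1, Finset.sum_congr rfl e2, Finset.sum_congr rfl e3] at this
      exact this
    refine hCS.trans ?_
    apply mul_le_mul_of_nonneg_right (hsumG_le j)
    exact Finset.sum_nonneg fun n _ => mul_nonneg (hG0 _)
      (mul_nonneg (wgt_pos k n).le (sq_nonneg _))
  -- summability of the majorant
  have hmajsummand : ∀ n : Freq d,
      Summable (fun j : Freq d => (‖f (j - n)‖ * wgt k (j - n)) * (wgt k n * ‖u n‖ ^ 2)) :=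
    fun n => (hGtrans n).mul_right _
  have hmajsum : Summable (fun j : Freq d =>
      ∑ n ∈ F, (‖f (j - n)‖ * wgt k (j - n)) * (wgt k n * ‖u n‖ ^ 2)) :=
    summable_sum fun n _ => hmajsummand n
  have hmajtsum : (∑' j : Freq d,
      ∑ n ∈ F, (‖f (j - n)‖ * wgt k (j - n)) * (wgt k n * ‖u n‖ ^ 2))
      = (∑' m : Freq d, ‖f m‖ * wgt k m) * ∑ n ∈ F, wgt k n * ‖u n‖ ^ 2 := by
    rw [Summable.tsum_finsetSum fun n _ => hmajsummand n]
    rw [Finset.mul_sum]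
    refine Finset.sum_congr rfl fun n _ => ?_
    rw [tsum_mul_right, hGtsum n]
  -- sum up
  have hSsum : Summable (fun j : Freq d =>
      wt k 0 (1/2) j * ‖(cmul f (Pp k (dAl k u)) - Pp k (cmul f (dAl k u))) j‖ ^ 2) := by
    refine Summable.of_nonneg_of_le (fun j => ?_) hptwise (hmajsum.mul_left _)
    rw [wt0_eq]
    exact mul_nonneg (wgt_pos k j).le (sq_nonneg _)
  have hS : (∑' j : Freq d,
      wt k 0 (1/2) j * ‖(cmul f (Pp k (dAl k u)) - Pp k (cmul f (dAl k u))) j‖ ^ 2)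
      ≤ (∑' m : Freq d, ‖f m‖ * wgt k m) ^ 2 * ∑ n ∈ F, wgt k n * ‖u n‖ ^ 2 := by
    calc (∑' j : Freq d,
        wt k 0 (1/2) j * ‖(cmul f (Pp k (dAl k u)) - Pp k (cmul f (dAl k u))) j‖ ^ 2)
        ≤ ∑' j : Freq d, (∑' m : Freq d, ‖f m‖ * wgt k m) *
            ∑ n ∈ F, (‖f (j - n)‖ * wgt k (j - n)) * (wgt k n * ‖u n‖ ^ 2) :=
          Summable.tsum_le_tsum hptwise hSsum (hmajsum.mul_left _)
      _ = (∑' m : Freq d, ‖f m‖ * wgt k m) *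
            ((∑' m : Freq d, ‖f m‖ * wgt k m) * ∑ n ∈ F, wgt k n * ‖u n‖ ^ 2) := by
          rw [tsum_mul_left, hmajtsum]
      _ = _ := by ring
  -- conclude
  unfold sobNorm
  calc Real.sqrt (∑' j : Freq d,
      wt k 0 (1/2) j * ‖(cmul f (Pp k (dAl k u)) - Pp k (cmul f (dAl k u))) j‖ ^ 2)
      ≤ Real.sqrt ((∑' m : Freq d, ‖f m‖ * wgt k m) ^ 2 * ∑ n ∈ F, wgt k n * ‖u n‖ ^ 2) :=
        Real.sqrt_le_sqrt hS
    _ = (∑' m : Freq d, ‖f m‖ * wgt k m) * Real.sqrt (∑ n ∈ F, wgt k n * ‖u n‖ ^ 2) := by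
        rw [Real.sqrt_mul (sq_nonneg _), Real.sqrt_sq hA0]
    _ ≤ (B * sobNorm k s (1/2) f) * Real.sqrt (∑ n ∈ F, wgt k n * ‖u n‖ ^ 2) :=
        mul_le_mul_of_nonneg_right hAle (Real.sqrt_nonneg _)
    _ ≤ ((B + 1) * sobNorm k s (1/2) f) * Real.sqrt (∑ n ∈ F, wgt k n * ‖u n‖ ^ 2) := by
        have hfn : 0 ≤ sobNorm k s (1/2) f := Real.sqrt_nonneg _
        have : B * sobNorm k s (1/2) f ≤ (B + 1) * sobNorm k s (1/2) f := by nlinarith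
        exact mul_le_mul_of_nonneg_right this (Real.sqrt_nonneg _)
    _ = (B + 1) * sobNorm k s (1/2) f * sobNorm k 0 (1/2) u := by
        rw [hUnorm]


end
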